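/- Lipschitz sensitivity of QDP fixed points in the interpolation parameter: there exists a constant C, depending only on the reward distributions of the MDP and on γ (and m), such that for all λ, λ' ∈ [0,1]^{X×[m]}, ‖θ̂^π_λ − θ̂^π_{λ'}‖_∞ ≤ C·‖λ − λ'‖_∞. In particular, the map λ ↦ θ̂^π_λ is Lipschitz continuous, and one has the intermediate bound ‖θ̂^π_λ − θ̂^π_{λ'}‖_∞ ≤ (1/(1−γ))·‖(Π^λ − Π^{λ'}) T^π θ̂^π_λ‖_∞. -/

import Mathlib

open MeasureTheory ProbabilityTheory Set
open scoped ENNReal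

/-- Generalized inverse CDF (least τ-quantile). -/
noncomputable def invCDF (ν : Measure ℝ) (τ : ℝ) : ℝ := sInf {y | τ ≤ cdf ν y}

/-- Upper inverse CDF (greatest τ-quantile). -/
noncomputable def upInvCDF (ν : Measure ℝ) (τ : ℝ) : ℝ := sInf {y | τ < cdf ν y}

/-- Quantile level τ_i = (2i-1)/(2m), with `i : Fin m` zero-indexed. -/
noncomputable def qlevel (m : ℕ) (i : Fin m) : ℝ := (2 * (i : ℝ) + 1) / (2 * m)

/-- The uniform m-atom distribution with the given particle locations. -/
noncomputable def paramDistOne {m : ℕ} (θ : Fin m → ℝ) : Measure ℝ :=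
  (m : ℝ≥0∞)⁻¹ • ∑ i : Fin m, Measure.dirac (θ i)

/-- Return-distribution function associated with quantile parameters θ. -/
noncomputable def paramDist {X : Type*} {m : ℕ} (θ : X → Fin m → ℝ) : X → Measure ℝ :=
  fun x => paramDistOne (θ x)

/-- The distributional Bellman operator T^π. -/
noncomputable def bellman {X : Type*} [MeasurableSpace X]
    (P : X → Measure (ℝ × X)) (γ : ℝ) (η : X → Measure ℝ) : X → Measure ℝ :=
  fun x => (P x).bind (fun p => (η p.2).map (fun z => p.1 + γ * z))

/-- The quantile projection Π^λ, parameter-level output. -/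
noncomputable def projParam {X : Type*} {m : ℕ} (lam : X → Fin m → ℝ)
    (η : X → Measure ℝ) : X → Fin m → ℝ :=
  fun x i => (1 - lam x i) * invCDF (η x) (qlevel m i) + lam x i * upInvCDF (η x) (qlevel m i)

/-- The quantile projection Π^λ on return-distribution functions. -/
noncomputable def proj {X : Type*} {m : ℕ} (lam : X → Fin m → ℝ)
    (η : X → Measure ℝ) : X → Measure ℝ :=
  paramDist (projParam lam η)

/-- The projected distributional Bellman operator Π^λ T^π acting on parameters. -/
noncomputable def projBellmanParam {X : Type*} [MeasurableSpace X]
    (P : X → Measure (ℝ × X)) (γ : ℝ) {m : ℕ} (lam : X → Fin m → ℝ)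
    (θ : X → Fin m → ℝ) : X → Fin m → ℝ :=
  projParam lam (bellman P γ (paramDist θ))

/-- The cube [0,1]^{X×[m]} of interpolation parameters. -/
def unitCube (X : Type*) (m : ℕ) : Set (X → Fin m → ℝ) :=
  {lam | ∀ x i, lam x i ∈ Set.Icc (0:ℝ) 1}

/-- Wasserstein-∞ distance (valued in [0,∞]). -/
noncomputable def winf (ν ν' : Measure ℝ) : ℝ≥0∞ :=
  ⨆ t : Set.Ioo (0:ℝ) 1, ENNReal.ofReal |invCDF ν t - invCDF ν' t|

/-- Extension of w∞ to return-distribution functions: max over states. -/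
noncomputable def wbar {X : Type*} (η η' : X → Measure ℝ) : ℝ≥0∞ :=
  ⨆ x : X, winf (η x) (η' x)

/-- Wasserstein-1 distance between probability distributions on ℝ. -/
noncomputable def w1 (ν ν' : Measure ℝ) : ℝ :=
  ∫ t in Set.Ioo (0:ℝ) 1, |invCDF ν t - invCDF ν' t|

/-- Uniform m-atom distributions. -/
noncomputable def FQ (m : ℕ) : Set (Measure ℝ) :=
  {ν | ∃ z : Fin m → ℝ, ν = paramDistOne z}


section sensitivityAux

open Filter

variable {X : Type*} [Fintype X] [MeasurableSpace X] [MeasurableSingletonClass X]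

lemma map_paramDist_apply (γ : ℝ) {m : ℕ} (θ : X → Fin m → ℝ) (p : ℝ × X)
    {s : Set ℝ} (hs : MeasurableSet s) :
    ((paramDist θ p.2).map (fun z => p.1 + γ * z)) s
      = (m : ℝ≥0∞)⁻¹ * ∑ i : Fin m, s.indicator 1 (p.1 + γ * θ p.2 i) := by
  rw [paramDist, paramDistOne, Measure.map_apply (by fun_prop) hs,
    Measure.smul_apply, Measure.finset_sum_apply, smul_eq_mul]
  congr 1
  refine Finset.sum_congr rfl fun i _ => ?_
  rw [Measure.dirac_apply' _ (hs.preimage (by fun_prop))]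
  by_cases h : p.1 + γ * θ p.2 i ∈ s <;> simp [Set.indicator, h]

lemma measurable_bellKernel (γ : ℝ) {m : ℕ} (θ : X → Fin m → ℝ) :
    Measurable (fun p : ℝ × X => (paramDist θ p.2).map (fun z => p.1 + γ * z)) := by
  apply Measure.measurable_of_measurable_coe
  intro s hs
  simp only [fun p => map_paramDist_apply γ θ p hs]
  exact (Finset.measurable_sum _ fun i _ =>
    (measurable_const.indicator hs).comp
      (measurable_fst.add
        (((measurable_of_countable fun x => θ x i).comp measurable_snd).const_mul γ))).const_mul _

lemma bell_apply (P : X → Measure (ℝ × X)) (γ : ℝ) {m : ℕ} (θ : X → Fin m → ℝ) (x : X)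
    {s : Set ℝ} (hs : MeasurableSet s) :
    bellman P γ (paramDist θ) x s
      = ∫⁻ p, (m : ℝ≥0∞)⁻¹ * ∑ i : Fin m, s.indicator 1 (p.1 + γ * θ p.2 i) ∂(P x) := by
  rw [bellman, Measure.bind_apply hs (measurable_bellKernel γ θ).aemeasurable]
  exact lintegral_congr fun p => map_paramDist_apply γ θ p hs

lemma bell_prob (P : X → Measure (ℝ × X)) (hP : ∀ x, IsProbabilityMeasure (P x))
    (γ : ℝ) {m : ℕ} (hm : 0 < m) (θ : X → Fin m → ℝ) (x : X) :
    IsProbabilityMeasure (bellman P γ (paramDist θ) x) := by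
  constructor
  rw [bell_apply P γ θ x MeasurableSet.univ]
  haveI := hP x
  simp only [Set.indicator_univ, Pi.one_apply, Finset.sum_const, Finset.card_univ,
    Fintype.card_fin, nsmul_eq_mul, mul_one]
  rw [lintegral_const, measure_univ, mul_one,
    ENNReal.inv_mul_cancel (by exact_mod_cast hm.ne') (by simp)]

lemma bddBelow_invSet {ν : Measure ℝ} [IsProbabilityMeasure ν] {τ : ℝ} (hτ : 0 < τ) :
    BddBelow {y | τ ≤ cdf ν y} := by
  obtain ⟨y0, hy0⟩ := eventually_atBot.mp ((tendsto_cdf_atBot ν).eventually_lt_const hτ)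
  refine ⟨y0, fun z hz => ?_⟩
  by_contra h
  exact absurd hz (not_le.mpr (hy0 z (le_of_not_ge h)))

lemma bddBelow_upSet {ν : Measure ℝ} [IsProbabilityMeasure ν] {τ : ℝ} (hτ : 0 < τ) :
    BddBelow {y | τ < cdf ν y} :=
  (bddBelow_invSet hτ).mono (fun y (hy : τ < _) => (le_of_lt hy : y ∈ {y | τ ≤ cdf ν y}))

lemma nonempty_upSet {ν : Measure ℝ} [IsProbabilityMeasure ν] {τ : ℝ} (hτ : τ < 1) :
    {y | τ < cdf ν y}.Nonempty :=
  ((tendsto_cdf_atTop ν).eventually_const_lt hτ).exists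

lemma nonempty_invSet {ν : Measure ℝ} [IsProbabilityMeasure ν] {τ : ℝ} (hτ : τ < 1) :
    {y | τ ≤ cdf ν y}.Nonempty := by
  obtain ⟨y, hy⟩ := nonempty_upSet (ν := ν) hτ
  exact ⟨y, show τ ≤ cdf ν y from le_of_lt hy⟩

lemma invCDF_shift {ν ν' : Measure ℝ} [IsProbabilityMeasure ν] [IsProbabilityMeasure ν']
    {τ ε : ℝ} (hτ0 : 0 < τ) (hτ1 : τ < 1) (h : ∀ y, cdf ν y ≤ cdf ν' (y + ε)) :
    invCDF ν' τ ≤ invCDF ν τ + ε := by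
  have key : ∀ y ∈ {y | τ ≤ cdf ν y}, invCDF ν' τ - ε ≤ y := fun y hy => by
    have h2 : y + ε ∈ {y | τ ≤ cdf ν' y} := le_trans hy (h y)
    have := csInf_le (bddBelow_invSet hτ0) h2
    unfold invCDF; linarith [this]
  have := le_csInf (nonempty_invSet hτ1) key
  unfold invCDF at *; linarith

lemma upInvCDF_shift {ν ν' : Measure ℝ} [IsProbabilityMeasure ν] [IsProbabilityMeasure ν']
    {τ ε : ℝ} (hτ0 : 0 < τ) (hτ1 : τ < 1) (h : ∀ y, cdf ν y ≤ cdf ν' (y + ε)) :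
    upInvCDF ν' τ ≤ upInvCDF ν τ + ε := by
  have key : ∀ y ∈ {y | τ < cdf ν y}, upInvCDF ν' τ - ε ≤ y := fun y hy => by
    have h2 : y + ε ∈ {y | τ < cdf ν' y} := lt_of_lt_of_le hy (h y)
    have := csInf_le (bddBelow_upSet hτ0) h2
    unfold upInvCDF; linarith [this]
  have := le_csInf (nonempty_upSet hτ1) key
  unfold upInvCDF at *; linarith

lemma invCDF_le_upInvCDF {ν : Measure ℝ} [IsProbabilityMeasure ν] {τ : ℝ}
    (hτ0 : 0 < τ) (hτ1 : τ < 1) : invCDF ν τ ≤ upInvCDF ν τ :=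
  csInf_le_csInf (bddBelow_invSet hτ0) (nonempty_upSet hτ1)
    (fun y (hy : τ < _) => (le_of_lt hy : τ ≤ _))

lemma bell_cdf_shift (P : X → Measure (ℝ × X)) (hP : ∀ x, IsProbabilityMeasure (P x))
    {γ : ℝ} (hγ0 : 0 ≤ γ) {m : ℕ} (hm : 0 < m) {θ θ' : X → Fin m → ℝ} {ε : ℝ}
    (h : ∀ z i, θ' z i ≤ θ z i + ε) (x : X) (y : ℝ) :
    cdf (bellman P γ (paramDist θ) x) y ≤ cdf (bellman P γ (paramDist θ') x) (y + γ * ε) := by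
  haveI := bell_prob P hP γ hm θ x
  haveI := bell_prob P hP γ hm θ' x
  rw [cdf_eq_real, cdf_eq_real, measureReal_def, measureReal_def]
  apply ENNReal.toReal_mono (measure_ne_top _ _)
  rw [bell_apply P γ θ x measurableSet_Iic, bell_apply P γ θ' x measurableSet_Iic]
  refine lintegral_mono fun p => ?_
  refine mul_le_mul_right (Finset.sum_le_sum fun i _ => ?_) _
  by_cases hc : p.1 + γ * θ p.2 i ∈ Iic y
  · have h2 : p.1 + γ * θ' p.2 i ∈ Iic (y + γ * ε) := by
      simp only [mem_Iic] at hc ⊢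
      nlinarith [h p.2 i]
    rw [Set.indicator_of_mem hc, Set.indicator_of_mem h2]; simp
  · rw [Set.indicator_of_notMem hc]
    exact zero_le

lemma combo_abs_le {l a b a' b' c : ℝ} (h0 : 0 ≤ l) (h1 : l ≤ 1)
    (ha : |a - a'| ≤ c) (hb : |b - b'| ≤ c) :
    |((1 - l) * a + l * b) - ((1 - l) * a' + l * b')| ≤ c := by
  have he : ((1 - l) * a + l * b) - ((1 - l) * a' + l * b')
      = (1 - l) * (a - a') + l * (b - b') := by ring
  rw [he]
  calc |(1 - l) * (a - a') + l * (b - b')| ≤ |(1 - l) * (a - a')| + |l * (b - b')| :=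
        abs_add_le _ _
    _ = (1 - l) * |a - a'| + l * |b - b'| := by
        rw [abs_mul, abs_mul, abs_of_nonneg (by linarith), abs_of_nonneg h0]
    _ ≤ (1 - l) * c + l * c :=
        add_le_add (mul_le_mul_of_nonneg_left ha (by linarith))
          (mul_le_mul_of_nonneg_left hb h0)
    _ = c := by ring

lemma pi2_norm_le {m : ℕ} {f : X → Fin m → ℝ} {c : ℝ} (hc : 0 ≤ c)
    (h : ∀ x i, |f x i| ≤ c) : ‖f‖ ≤ c := by
  refine (pi_norm_le_iff_of_nonneg hc).mpr fun x => ?_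
  refine (pi_norm_le_iff_of_nonneg hc).mpr fun i => ?_
  simpa [Real.norm_eq_abs] using h x i

lemma le_pi2_norm {m : ℕ} (f : X → Fin m → ℝ) (x : X) (i : Fin m) : |f x i| ≤ ‖f‖ := by
  have h1 := norm_le_pi_norm f x
  have h2 := norm_le_pi_norm (f x) i
  rw [Real.norm_eq_abs] at h2
  linarith

end sensitivityAux

/-- Lipschitz sensitivity of QDP fixed points in the interpolation
parameter: there is a constant `C` (depending only on the MDP and `γ`, `m`) with
`‖θ̂^π_λ − θ̂^π_{λ'}‖_∞ ≤ C‖λ − λ'‖_∞`, together with the intermediate bound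
`‖θ̂^π_λ − θ̂^π_{λ'}‖_∞ ≤ (1/(1−γ))‖(Π^λ − Π^{λ'}) T^π θ̂^π_λ‖_∞`. -/
theorem qdp_fixed_point_sensitivity
    {X : Type*} [Fintype X] [MeasurableSpace X] [MeasurableSingletonClass X]
    (P : X → Measure (ℝ × X)) (hP : ∀ x, IsProbabilityMeasure (P x))
    (hPmean : ∀ x, Integrable (fun p : ℝ × X => p.1) (P x))
    (γ : ℝ) (hγ0 : 0 ≤ γ) (hγ1 : γ < 1) {m : ℕ} (hm : 0 < m)
    (θhat : (X → Fin m → ℝ) → X → Fin m → ℝ)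
    (hθhat : ∀ lam ∈ unitCube X m,
      projBellmanParam P γ lam (θhat lam) = θhat lam)
    (hθhatUnique : ∀ lam ∈ unitCube X m, ∀ θ : X → Fin m → ℝ,
      projBellmanParam P γ lam θ = θ → θ = θhat lam) :
    (∃ C : ℝ, ∀ lam ∈ unitCube X m, ∀ lam' ∈ unitCube X m,
      ‖θhat lam - θhat lam'‖ ≤ C * ‖lam - lam'‖)
    ∧ (∀ lam ∈ unitCube X m, ∀ lam' ∈ unitCube X m,
      ‖θhat lam - θhat lam'‖ ≤ (1 / (1 - γ)) *
        ‖projBellmanParam P γ lam (θhat lam)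
          - projBellmanParam P γ lam' (θhat lam)‖) := by
  classical
  have h1γ : (0:ℝ) < 1 - γ := by linarith
  have hmR : (0:ℝ) < m := by exact_mod_cast hm
  have hq0 : ∀ i : Fin m, 0 < qlevel m i := fun i => by
    unfold qlevel
    apply div_pos
    · have : (0:ℝ) ≤ (i : ℝ) := Nat.cast_nonneg _
      linarith
    · linarith
  have hq1 : ∀ i : Fin m, qlevel m i < 1 := fun i => by
    unfold qlevel
    rw [div_lt_one (by linarith)]
    have hi : ((i : ℕ) : ℝ) + 1 ≤ (m : ℝ) := by exact_mod_cast i.isLt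
    linarith
  have hprob : ∀ (θ : X → Fin m → ℝ) (x : X),
      IsProbabilityMeasure (bellman P γ (paramDist θ) x) := fun θ x =>
    bell_prob P hP γ hm θ x
  -- two-sided quantile comparison
  have qdiff : ∀ (θ θ' : X → Fin m → ℝ) (ε : ℝ), (∀ z j, |θ z j - θ' z j| ≤ ε) →
      ∀ (x : X) (i : Fin m),
      |invCDF (bellman P γ (paramDist θ) x) (qlevel m i)
        - invCDF (bellman P γ (paramDist θ') x) (qlevel m i)| ≤ γ * ε
      ∧ |upInvCDF (bellman P γ (paramDist θ) x) (qlevel m i)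
        - upInvCDF (bellman P γ (paramDist θ') x) (qlevel m i)| ≤ γ * ε := by
    intro θ θ' ε hd x i
    haveI := hprob θ x
    haveI := hprob θ' x
    have s1 : ∀ y, cdf (bellman P γ (paramDist θ) x) y
        ≤ cdf (bellman P γ (paramDist θ') x) (y + γ * ε) :=
      bell_cdf_shift P hP hγ0 hm (fun z j => by
        have := abs_le.mp (hd z j); linarith [this.1]) x
    have s2 : ∀ y, cdf (bellman P γ (paramDist θ') x) y
        ≤ cdf (bellman P γ (paramDist θ) x) (y + γ * ε) :=
      bell_cdf_shift P hP hγ0 hm (fun z j => by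
        have := abs_le.mp (hd z j); linarith [this.2]) x
    constructor
    · rw [abs_le]
      constructor
      · have := invCDF_shift (hq0 i) (hq1 i) s1
        linarith
      · have := invCDF_shift (hq0 i) (hq1 i) s2
        linarith
    · rw [abs_le]
      constructor
      · have := upInvCDF_shift (hq0 i) (hq1 i) s1
        linarith
      · have := upInvCDF_shift (hq0 i) (hq1 i) s2
        linarith
  -- contraction in θ
  have contr : ∀ lam ∈ unitCube X m, ∀ θ θ' : X → Fin m → ℝ, ∀ (x : X) (i : Fin m),
      |projBellmanParam P γ lam θ x i - projBellmanParam P γ lam θ' x i|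
        ≤ γ * ‖θ - θ'‖ := by
    intro lam hlam θ θ' x i
    have hd : ∀ z j, |θ z j - θ' z j| ≤ ‖θ - θ'‖ := fun z j => by
      have := le_pi2_norm (θ - θ') z j
      simpa [Pi.sub_apply] using this
    obtain ⟨hinv, hup⟩ := qdiff θ θ' ‖θ - θ'‖ hd x i
    obtain ⟨hl0, hl1⟩ := hlam x i
    simp only [projBellmanParam, projParam]
    exact combo_abs_le hl0 hl1 hinv hup
  -- intermediate bound (part 2)
  have part2 : ∀ lam ∈ unitCube X m, ∀ lam' ∈ unitCube X m,
      ‖θhat lam - θhat lam'‖ ≤ (1 / (1 - γ)) *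
        ‖projBellmanParam P γ lam (θhat lam)
          - projBellmanParam P γ lam' (θhat lam)‖ := by
    intro lam hlam lam' hlam'
    set Δ := ‖projBellmanParam P γ lam (θhat lam)
      - projBellmanParam P γ lam' (θhat lam)‖ with hΔdef
    set a := ‖θhat lam - θhat lam'‖ with hadef
    have hΔ0 : 0 ≤ Δ := norm_nonneg _
    have ha0 : 0 ≤ a := norm_nonneg _
    have key : a ≤ Δ + γ * a := by
      rw [hadef]
      refine pi2_norm_le (by positivity) fun x i => ?_
      have e1 : θhat lam x i = projBellmanParam P γ lam (θhat lam) x i :=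
        (congrFun (congrFun (hθhat lam hlam) x) i).symm
      have e2 : θhat lam' x i = projBellmanParam P γ lam' (θhat lam') x i :=
        (congrFun (congrFun (hθhat lam' hlam') x) i).symm
      have t1 : |projBellmanParam P γ lam (θhat lam) x i
          - projBellmanParam P γ lam' (θhat lam) x i| ≤ Δ := by
        have := le_pi2_norm (projBellmanParam P γ lam (θhat lam)
          - projBellmanParam P γ lam' (θhat lam)) x i
        simpa [Pi.sub_apply] using this
      have t2 : |projBellmanParam P γ lam' (θhat lam) x i
          - projBellmanParam P γ lam' (θhat lam') x i| ≤ γ * a :=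
        contr lam' hlam' (θhat lam) (θhat lam') x i
      have habs : |θhat lam x i - θhat lam' x i|
          ≤ |projBellmanParam P γ lam (θhat lam) x i
              - projBellmanParam P γ lam' (θhat lam) x i|
            + |projBellmanParam P γ lam' (θhat lam) x i
              - projBellmanParam P γ lam' (θhat lam') x i| := by
        rw [e1, e2]
        exact abs_sub_le _ _ _
      calc |(θhat lam - θhat lam') x i| = |θhat lam x i - θhat lam' x i| := by
            simp [Pi.sub_apply]
        _ ≤ _ := habs
        _ ≤ Δ + γ * a := add_le_add t1 t2
    have h2 : (1 - γ) * a ≤ Δ := by linarith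
    calc a = ((1 - γ) * a) / (1 - γ) := by field_simp
      _ ≤ Δ / (1 - γ) := by gcongr
      _ = (1 / (1 - γ)) * Δ := by ring
  -- uniform bound machinery for part 1
  set θ0 : X → Fin m → ℝ := fun _ _ => 0 with hθ0def
  set K0 : ℝ := ⨆ x : X, ⨆ i : Fin m,
    max |invCDF (bellman P γ (paramDist θ0) x) (qlevel m i)|
        |upInvCDF (bellman P γ (paramDist θ0) x) (qlevel m i)| with hK0def
  have hK0 : ∀ (x : X) (i : Fin m),
      max |invCDF (bellman P γ (paramDist θ0) x) (qlevel m i)|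
          |upInvCDF (bellman P γ (paramDist θ0) x) (qlevel m i)| ≤ K0 := by
    intro x i
    rw [hK0def]
    refine le_trans ?_ (le_ciSup (f := fun x : X => ⨆ i : Fin m,
        max |invCDF (bellman P γ (paramDist θ0) x) (qlevel m i)|
            |upInvCDF (bellman P γ (paramDist θ0) x) (qlevel m i)|)
      (Set.Finite.bddAbove (Set.finite_range _)) x)
    exact le_ciSup (f := fun i : Fin m =>
        max |invCDF (bellman P γ (paramDist θ0) x) (qlevel m i)|
            |upInvCDF (bellman P γ (paramDist θ0) x) (qlevel m i)|)
      (Set.Finite.bddAbove (Set.finite_range _)) i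
  have hK0nn : 0 ≤ K0 :=
    Real.iSup_nonneg fun x => Real.iSup_nonneg fun i =>
      le_trans (abs_nonneg _) (le_max_left _ _)
  have qabs : ∀ (θ : X → Fin m → ℝ) (x : X) (i : Fin m),
      |invCDF (bellman P γ (paramDist θ) x) (qlevel m i)| ≤ K0 + γ * ‖θ‖
      ∧ |upInvCDF (bellman P γ (paramDist θ) x) (qlevel m i)| ≤ K0 + γ * ‖θ‖ := by
    intro θ x i
    have hd : ∀ z j, |θ z j - θ0 z j| ≤ ‖θ‖ := fun z j => by
      have := le_pi2_norm θ z j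
      simpa [hθ0def] using this
    obtain ⟨hinv, hup⟩ := qdiff θ θ0 ‖θ‖ hd x i
    have b1 := hK0 x i
    constructor
    · have := abs_sub_abs_le_abs_sub (invCDF (bellman P γ (paramDist θ) x) (qlevel m i))
        (invCDF (bellman P γ (paramDist θ0) x) (qlevel m i))
      have := le_max_left |invCDF (bellman P γ (paramDist θ0) x) (qlevel m i)|
        |upInvCDF (bellman P γ (paramDist θ0) x) (qlevel m i)|
      linarith [abs_sub_abs_le_abs_sub (invCDF (bellman P γ (paramDist θ) x) (qlevel m i))
        (invCDF (bellman P γ (paramDist θ0) x) (qlevel m i))]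
    · have := le_max_right |invCDF (bellman P γ (paramDist θ0) x) (qlevel m i)|
        |upInvCDF (bellman P γ (paramDist θ0) x) (qlevel m i)|
      linarith [abs_sub_abs_le_abs_sub (upInvCDF (bellman P γ (paramDist θ) x) (qlevel m i))
        (upInvCDF (bellman P γ (paramDist θ0) x) (qlevel m i))]
  set B : ℝ := K0 / (1 - γ) with hBdef
  have hBnn : 0 ≤ B := div_nonneg hK0nn (le_of_lt h1γ)
  have hθB : ∀ lam ∈ unitCube X m, ‖θhat lam‖ ≤ B := by
    intro lam hlam
    set b := ‖θhat lam‖ with hbdef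
    have hb0 : 0 ≤ b := norm_nonneg _
    have key : b ≤ K0 + γ * b := by
      rw [hbdef]
      refine pi2_norm_le (by positivity) fun x i => ?_
      have e1 : θhat lam x i = projBellmanParam P γ lam (θhat lam) x i :=
        (congrFun (congrFun (hθhat lam hlam) x) i).symm
      rw [e1]
      obtain ⟨hl0, hl1⟩ := hlam x i
      obtain ⟨h1, h2⟩ := qabs (θhat lam) x i
      simp only [projBellmanParam, projParam]
      have := combo_abs_le (a' := 0) (b' := 0) hl0 hl1
        (by simpa using h1) (by simpa using h2)
      simpa using this
    rw [hBdef]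
    rw [le_div_iff₀ h1γ]
    linarith
  set E : ℝ := K0 + γ * B with hEdef
  have hEnn : 0 ≤ E := by positivity
  -- part 1
  refine ⟨⟨(1 / (1 - γ)) * (2 * E), fun lam hlam lam' hlam' => ?_⟩, part2⟩
  have hq2 : ∀ x i,
      |invCDF (bellman P γ (paramDist (θhat lam)) x) (qlevel m i)| ≤ E
      ∧ |upInvCDF (bellman P γ (paramDist (θhat lam)) x) (qlevel m i)| ≤ E := by
    intro x i
    obtain ⟨h1, h2⟩ := qabs (θhat lam) x i
    have hb := hθB lam hlam
    have : γ * ‖θhat lam‖ ≤ γ * B := mul_le_mul_of_nonneg_left hb hγ0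
    exact ⟨by rw [hEdef]; linarith, by rw [hEdef]; linarith⟩
  have hΔle : ‖projBellmanParam P γ lam (θhat lam)
      - projBellmanParam P γ lam' (θhat lam)‖ ≤ 2 * E * ‖lam - lam'‖ := by
    refine pi2_norm_le (by positivity) fun x i => ?_
    have hdl : |lam x i - lam' x i| ≤ ‖lam - lam'‖ := by
      have := le_pi2_norm (lam - lam') x i
      simpa [Pi.sub_apply] using this
    haveI := hprob (θhat lam) x
    have hqle : invCDF (bellman P γ (paramDist (θhat lam)) x) (qlevel m i)
        ≤ upInvCDF (bellman P γ (paramDist (θhat lam)) x) (qlevel m i) :=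
      invCDF_le_upInvCDF (hq0 i) (hq1 i)
    obtain ⟨h1, h2⟩ := hq2 x i
    set q := invCDF (bellman P γ (paramDist (θhat lam)) x) (qlevel m i) with hqdef
    set qb := upInvCDF (bellman P γ (paramDist (θhat lam)) x) (qlevel m i) with hqbdef
    have he : (projBellmanParam P γ lam (θhat lam)
        - projBellmanParam P γ lam' (θhat lam)) x i
        = (lam x i - lam' x i) * (qb - q) := by
      simp only [Pi.sub_apply, projBellmanParam, projParam, ← hqdef, ← hqbdef]
      ring
    rw [he, abs_mul]
    have hqbq : |qb - q| ≤ 2 * E := by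
      obtain ⟨a1, a2⟩ := abs_le.mp h1
      obtain ⟨b1, b2⟩ := abs_le.mp h2
      rw [abs_le]
      constructor <;> linarith
    calc |lam x i - lam' x i| * |qb - q| ≤ ‖lam - lam'‖ * (2 * E) :=
          mul_le_mul hdl hqbq (abs_nonneg _) (norm_nonneg _)
      _ = 2 * E * ‖lam - lam'‖ := by ring
  calc ‖θhat lam - θhat lam'‖
      ≤ (1 / (1 - γ)) * ‖projBellmanParam P γ lam (θhat lam)
          - projBellmanParam P γ lam' (θhat lam)‖ := part2 lam hlam lam' hlam'
    _ ≤ (1 / (1 - γ)) * (2 * E * ‖lam - lam'‖) :=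
        mul_le_mul_of_nonneg_left hΔle (by positivity)
    _ = (1 / (1 - γ)) * (2 * E) * ‖lam - lam'‖ := by ring
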